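/- In any Conway semiring, the identity (a+1)* = a* · a** holds; consequently, in a Conway semiring satisfying 1*·1* = 1*, 1*·a = a·1*, and 1*·(1*a)* = 1*·a*, one has a** = 1*·a* and (1+a)* = 1*·a* for all a. -/
import Mathlib


/-- In any Conway semiring, `(a+1)* = a*·a**` holds; consequently, in a Conway
semiring satisfying `1*·1* = 1*`, `1*·a = a·1*`, and `1*·(1*a)* = 1*·a*`, one
has `a** = 1*·a*` and `(1+a)* = 1*·a*` for all `a`. -/
theorem stmt_11 {S : Type*} [Semiring S] (star : S → S)
    (hsum : ∀ a b : S, star (a + b) = star a * star (b * star a))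
    (hprod : ∀ a b : S, star (a * b) = 1 + a * star (b * a) * b) :
    (∀ a : S, star (a + 1) = star a * star (star a)) ∧
    ((star 1 * star 1 = star 1) →
      (∀ a : S, star 1 * a = a * star 1) →
      (∀ a : S, star 1 * star (star 1 * a) = star 1 * star a) →
      ∀ a : S, star (star a) = star 1 * star a ∧ star (1 + a) = star 1 * star a) := by
  have e1 : ∀ a : S, star a = 1 + a * star a := fun a => by
    have h := hprod a 1
    simpa using h
  have part1 : ∀ a : S, star (a + 1) = star a * star (star a) := fun a => by
    have h := hsum a 1
    simpa using h
  refine ⟨part1, fun h1 h2 h3 a => ?_⟩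
  have s1 : (star 1 : S) = 1 + star 1 := by simpa using e1 1
  have key : star (1 + a) = star 1 * star a := by
    have h := hsum 1 a
    rw [← h2 a, h3 a] at h
    exact h
  have kk : star a * star (star a) = star 1 * star a := by
    have p1 := part1 a
    rw [add_comm a 1, key] at p1
    exact p1.symm
  have ss : star (star a) = 1 + star a * star (star a) := e1 (star a)
  rw [kk] at ss
  have final : 1 + star 1 * star a = star 1 * star a := by
    calc 1 + star 1 * star a = 1 + star 1 * (1 + a * star a) := by rw [← e1 a]
      _ = (1 + star 1) + star 1 * (a * star a) := by rw [mul_add, mul_one, ← add_assoc]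
      _ = star 1 + star 1 * (a * star a) := by rw [← s1]
      _ = star 1 * (1 + a * star a) := by rw [mul_add, mul_one]
      _ = star 1 * star a := by rw [← e1 a]
  exact ⟨ss.trans final, key⟩
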